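/- Let E be a finite-dimensional real inner product space and θ₀ ∈ E. Let L : E → ℝ be differentiable on a neighborhood of θ₀ with gradient map ∇L differentiable at θ₀, with Hessian H at θ₀ invertible as a continuous linear map on E. Let ℓ : E → ℝ be differentiable on a neighborhood of θ₀, and let θ : ℝ → E be differentiable at 0 with θ(0) = θ₀, with ε ↦ ∇ℓ(θ(ε)) continuous at 0 and ∇L(θ(ε)) + ε · ∇ℓ(θ(ε)) = 0 for all ε near 0. Let K : E → ℝ be differentiable at θ₀ and set g_KL = −∇K(θ₀). Then the derivative at ε = 0 of the composite ε ↦ K(θ(ε)) equals ⟪∇ℓ(θ₀), H⁻¹ g_KL⟫. -/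

import Mathlib

open RealInnerProductSpace

private lemma aux_smul_deriv {E : Type*} [NormedAddCommGroup E] [NormedSpace ℝ E]
    {g : ℝ → E} (hg : ContinuousAt g 0) :
    HasDerivAt (fun ε : ℝ => ε • g ε) (g 0) 0 := by
  rw [hasDerivAt_iff_tendsto_slope]
  have heq : (slope (fun ε : ℝ => ε • g ε) 0) =ᶠ[nhdsWithin 0 {(0:ℝ)}ᶜ] g := by
    filter_upwards [self_mem_nhdsWithin] with ε hε
    have hε' : (ε : ℝ) ≠ 0 := hε
    simp [slope_def_module, smul_smul, inv_mul_cancel₀ hε']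
  exact Filter.Tendsto.congr' heq.symm (hg.tendsto.mono_left nhdsWithin_le_nhds)

/-- The influence score estimates the target-preference gain.
Under the setup of Statement 6, if moreover `K : E → ℝ` is differentiable at
`θ₀` and `g_KL = −∇K(θ₀)`, then
`(d/dε) K(θ ε) |_{ε=0} = ⟪∇ℓ(θ₀), H⁻¹ g_KL⟫`. -/
theorem stmt_7 {E : Type*} [NormedAddCommGroup E] [InnerProductSpace ℝ E]
    [FiniteDimensional ℝ E] (θ₀ : E) (L ℓ : E → ℝ)
    (hL : ∀ᶠ x in nhds θ₀, DifferentiableAt ℝ L x)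
    (hL' : DifferentiableAt ℝ (gradient L) θ₀)
    (H : E ≃L[ℝ] E) (hH : (H : E →L[ℝ] E) = fderiv ℝ (gradient L) θ₀)
    (hℓ : ∀ᶠ x in nhds θ₀, DifferentiableAt ℝ ℓ x)
    (θ : ℝ → E) (hθ : DifferentiableAt ℝ θ 0) (hθ0 : θ 0 = θ₀)
    (hcont : ContinuousAt (fun ε : ℝ => gradient ℓ (θ ε)) 0)
    (hstat : ∀ᶠ ε in nhds (0 : ℝ), gradient L (θ ε) + ε • gradient ℓ (θ ε) = 0)
    (K : E → ℝ) (hK : DifferentiableAt ℝ K θ₀) :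
    deriv (fun ε => K (θ ε)) 0 =
      ⟪gradient ℓ θ₀, H.symm (-(gradient K θ₀))⟫ := by
  set D := InnerProductSpace.toDual ℝ E with hD
  -- symmetry of the Hessian
  have hgradL : HasFDerivAt (gradient L) (H : E →L[ℝ] E) θ₀ := by
    rw [hH]; exact hL'.hasFDerivAt
  have hsym : ∀ v w : E, ⟪H v, w⟫ = ⟪H w, v⟫ := by
    have hDgrad : HasFDerivAt (fun x => D (gradient L x))
        ((D.toContinuousLinearEquiv.toContinuousLinearMap).comp (H : E →L[ℝ] E)) θ₀ :=
      (D.toContinuousLinearEquiv.toContinuousLinearMap.hasFDerivAt).comp θ₀ hgradL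
    have hev : ∀ᶠ y in nhds θ₀, HasFDerivAt L (D (gradient L y)) y := by
      filter_upwards [hL] with y hy
      have : D (gradient L y) = fderiv ℝ L y := by simp [gradient, hD]
      rw [this]; exact hy.hasFDerivAt
    intro v w
    have h2 := second_derivative_symmetric_of_eventually hev hDgrad v w
    simpa [hD, InnerProductSpace.toDual_apply_apply] using h2
  -- derivative of θ
  set θ' := deriv θ 0 with hθ'
  have hθd : HasDerivAt θ θ' 0 := hθ.hasDerivAt
  -- derivative of ε ↦ gradient L (θ ε)
  have hA : HasDerivAt (fun ε => gradient L (θ ε)) (H θ') 0 := by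
    have := hθ0 ▸ hgradL
    simpa [Function.comp_def] using this.comp_hasDerivAt 0 hθd
  -- derivative from the stationarity equation
  have hB : HasDerivAt (fun ε => gradient L (θ ε)) (-(gradient ℓ θ₀)) 0 := by
    have h1 : HasDerivAt (fun ε : ℝ => -(ε • gradient ℓ (θ ε))) (-(gradient ℓ θ₀)) 0 := by
      have := (aux_smul_deriv hcont).neg
      simpa [hθ0, Pi.neg_def] using this
    apply h1.congr_of_eventuallyEq
    filter_upwards [hstat] with ε hε
    linear_combination (norm := module) hε
  have hkey : θ' = -(H.symm (gradient ℓ θ₀)) := by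
    have h2 : H θ' = -(gradient ℓ θ₀) := hA.unique hB
    have := congrArg H.symm h2
    simpa using this
  -- chain rule for K
  have hKd : HasDerivAt (fun ε => K (θ ε)) ⟪gradient K θ₀, θ'⟫ 0 := by
    have hfd : HasFDerivAt K (D (gradient K θ₀)) θ₀ := by
      have : D (gradient K θ₀) = fderiv ℝ K θ₀ := by simp [gradient, hD]
      rw [this]; exact hK.hasFDerivAt
    have hfd' := hθ0 ▸ hfd
    have := hfd'.comp_hasDerivAt 0 hθd
    simpa [hD, hθ0, Function.comp_def, InnerProductSpace.toDual_apply_apply] using this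
  rw [hKd.deriv, hkey]
  have hs : ⟪gradient ℓ θ₀, H.symm (gradient K θ₀)⟫ = ⟪gradient K θ₀, H.symm (gradient ℓ θ₀)⟫ := by
    have := hsym (H.symm (gradient ℓ θ₀)) (H.symm (gradient K θ₀))
    simpa using this
  simp only [map_neg, inner_neg_right]
  rw [hs]
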